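/- The sum over k of the coefficients c_{n,k} of the Kazhdan-Lusztig polynomial of the thagomizer matroid equals the n-th Catalan number: P_{T_n}(1) = \binom{2n}{n}/(n+1), where c_{n,k} = (1/(n+1)) \binom{n+1}{k} \sum_{j=2k}^{n} \binom{j-k-1}{k-1} \binom{n+1-k}{n-j} for k \ge 1 and c_{n,0} = 1. -/

import Mathlib

open PowerSeries Finset

/-- `G = (1-X)⁻¹` as a power series over `ℚ`. -/
noncomputable def Gser : ℚ⟦X⟧ := (PowerSeries.invOneSubPow ℚ 1).val

lemma Gser_pow (k : ℕ) : Gser ^ k = (PowerSeries.invOneSubPow ℚ k).val := by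
  rw [Gser, ← Units.val_pow_eq_pow_val]
  congr 1
  rw [invOneSubPow_eq_inv_one_sub_pow, invOneSubPow_eq_inv_one_sub_pow, ← pow_mul, one_mul]

lemma coeff_Gser_pow (k p : ℕ) (hk : 0 < k) :
    PowerSeries.coeff (R := ℚ) p (Gser ^ k) = ((k - 1 + p).choose (k - 1) : ℚ) := by
  rw [Gser_pow, invOneSubPow_val_eq_mk_sub_one_add_choose_of_pos ℚ k hk, coeff_mk]

lemma Gser_eq : (1 + X) + X ^ 2 * Gser = Gser := by
  have h : Gser * (1 - X) = 1 := by
    have := (PowerSeries.invOneSubPow ℚ 1).val_inv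
    rwa [invOneSubPow_inv_eq_one_sub_pow, pow_one] at this
  calc (1 + X) + X ^ 2 * Gser = (1 + X) * (Gser * (1 - X)) + X ^ 2 * Gser := by
        rw [h, mul_one]
    _ = ((1 + X) * (1 - X) + X ^ 2) * Gser := by ring
    _ = 1 * Gser := by congr 1; ring
    _ = Gser := one_mul _

lemma coeff_one_add_X_pow_ps (a i : ℕ) :
    PowerSeries.coeff (R := ℚ) i ((1 + X) ^ a) = (a.choose i : ℚ) := by
  have : ((1 + X : ℚ⟦X⟧)) ^ a = ((((1 + Polynomial.X) ^ a : Polynomial ℚ)) : ℚ⟦X⟧) := by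
    rw [Polynomial.coe_pow, Polynomial.coe_add, Polynomial.coe_one, Polynomial.coe_X]
  rw [this, Polynomial.coeff_coe, Polynomial.coeff_one_add_X_pow]

lemma coeff_term (n k : ℕ) (hk : 0 < k) :
    PowerSeries.coeff (R := ℚ) n ((X ^ 2 * Gser) ^ k * (1 + X) ^ (n + 1 - k)) =
      ∑ j ∈ Finset.Icc (2 * k) n, (((j - k - 1).choose (k - 1) : ℚ) *
        ((n + 1 - k).choose (n - j))) := by
  rw [mul_pow, ← pow_mul, mul_assoc, coeff_X_pow_mul']
  by_cases h2 : 2 * k ≤ n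
  · rw [if_pos h2, coeff_mul, Finset.Nat.sum_antidiagonal_eq_sum_range_succ_mk]
    rw [← Finset.Ico_add_one_right_eq_Icc, Finset.sum_Ico_eq_sum_range]
    have hrange : n + 1 - 2 * k = n - 2 * k + 1 := by omega
    rw [hrange]
    refine Finset.sum_congr rfl fun p hp => ?_
    rw [Finset.mem_range] at hp
    rw [coeff_Gser_pow k p hk, coeff_one_add_X_pow_ps]
    have e1 : 2 * k + p - k - 1 = k - 1 + p := by omega
    have e2 : n - (2 * k + p) = n - 2 * k - p := by omega
    simp [e1, e2]
  · rw [if_neg h2, Finset.Icc_eq_empty (by omega), Finset.sum_empty]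

lemma main_identity (n : ℕ) :
    ((n : ℚ) + 1) + ∑ k ∈ Finset.Icc 1 n, ((n + 1).choose k : ℚ) *
        ∑ j ∈ Finset.Icc (2 * k) n, (((j - k - 1).choose (k - 1) : ℚ) *
          ((n + 1 - k).choose (n - j))) =
      ((2 * n).choose n : ℚ) := by
  have expand : Gser ^ (n + 1) =
      ∑ k ∈ Finset.range (n + 2), (X ^ 2 * Gser) ^ k * (1 + X) ^ (n + 1 - k) *
        ((n + 1).choose k : ℚ⟦X⟧) := by
    have h := add_pow (X ^ 2 * Gser) (1 + X) (n + 1)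
    rw [← h]
    congr 1
    rw [add_comm, Gser_eq]
  have hcoeff := congrArg (PowerSeries.coeff (R := ℚ) n) expand
  rw [map_sum] at hcoeff
  have hterm : ∀ k, PowerSeries.coeff (R := ℚ) n
      ((X ^ 2 * Gser) ^ k * (1 + X) ^ (n + 1 - k) * ((n + 1).choose k : ℚ⟦X⟧)) =
      PowerSeries.coeff (R := ℚ) n ((X ^ 2 * Gser) ^ k * (1 + X) ^ (n + 1 - k)) *
        ((n + 1).choose k : ℚ) := by
    intro k
    rw [← map_natCast (PowerSeries.C (R := ℚ)) ((n + 1).choose k), coeff_mul_C]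
  simp only [hterm] at hcoeff
  -- LHS coefficient: C(2n, n)
  have hL : PowerSeries.coeff (R := ℚ) n (Gser ^ (n + 1)) = ((2 * n).choose n : ℚ) := by
    rw [coeff_Gser_pow (n + 1) n (by omega)]
    congr 2 <;> omega
  rw [hL] at hcoeff
  -- split the range sum
  have hsplit : Finset.range (n + 2) = insert 0 (insert (n + 1) (Finset.Icc 1 n)) := by
    ext x
    simp only [Finset.mem_range, Finset.mem_insert, Finset.mem_Icc]
    omega
  rw [hsplit, Finset.sum_insert (by simp), Finset.sum_insert (by simp)] at hcoeff
  -- k = 0 term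
  have h0 : PowerSeries.coeff (R := ℚ) n ((X ^ 2 * Gser) ^ 0 * (1 + X) ^ (n + 1 - 0)) *
      ((n + 1).choose 0 : ℚ) = (n : ℚ) + 1 := by
    rw [pow_zero, one_mul, Nat.sub_zero, coeff_one_add_X_pow_ps, Nat.choose_zero_right]
    rw [Nat.choose_succ_self_right]
    push_cast
    ring
  -- k = n + 1 term
  have h1 : PowerSeries.coeff (R := ℚ) n
      ((X ^ 2 * Gser) ^ (n + 1) * (1 + X) ^ (n + 1 - (n + 1))) *
      ((n + 1).choose (n + 1) : ℚ) = 0 := by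
    rw [coeff_term n (n + 1) (by omega), Finset.Icc_eq_empty (by omega),
      Finset.sum_empty, zero_mul]
  rw [h0, h1, zero_add] at hcoeff
  have h2 : ∀ k ∈ Finset.Icc 1 n,
      PowerSeries.coeff (R := ℚ) n ((X ^ 2 * Gser) ^ k * (1 + X) ^ (n + 1 - k)) *
        ((n + 1).choose k : ℚ) =
      ((n + 1).choose k : ℚ) * ∑ j ∈ Finset.Icc (2 * k) n,
        (((j - k - 1).choose (k - 1) : ℚ) * ((n + 1 - k).choose (n - j))) := by
    intro k hks
    rw [Finset.mem_Icc] at hks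
    rw [coeff_term n k (by omega), mul_comm]
  rw [Finset.sum_congr rfl h2] at hcoeff
  linarith [hcoeff]

/-- The sum over `k` of the coefficients
`c_{n,k} = (1/(n+1)) C(n+1,k) ∑_{j=2k}^n C(j-k-1, k-1) C(n+1-k, n-j)` (for `k ≥ 1`, with
`c_{n,0} = 1`) of the Kazhdan-Lusztig polynomial of the thagomizer matroid equals the `n`-th
Catalan number: `P_{T_n}(1) = C(2n, n)/(n+1)`. -/
theorem thagomizer_sum_catalan (n : ℕ) :
    (1 : ℚ) + ∑ k ∈ Finset.Icc 1 n, (1 / (n + 1) : ℚ) * ((n + 1).choose k) *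
        ∑ j ∈ Finset.Icc (2 * k) n, (((j - k - 1).choose (k - 1) : ℚ) *
          ((n + 1 - k).choose (n - j))) =
      ((2 * n).choose n : ℚ) / (n + 1) := by
  have hn : ((n : ℚ) + 1) ≠ 0 := by positivity
  have h := main_identity n
  have : (1 : ℚ) + ∑ k ∈ Finset.Icc 1 n, (1 / (n + 1) : ℚ) * ((n + 1).choose k) *
        ∑ j ∈ Finset.Icc (2 * k) n, (((j - k - 1).choose (k - 1) : ℚ) *
          ((n + 1 - k).choose (n - j))) =
      (1 / ((n : ℚ) + 1)) * (((n : ℚ) + 1) + ∑ k ∈ Finset.Icc 1 n, ((n + 1).choose k : ℚ) *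
        ∑ j ∈ Finset.Icc (2 * k) n, (((j - k - 1).choose (k - 1) : ℚ) *
          ((n + 1 - k).choose (n - j)))) := by
    rw [mul_add, Finset.mul_sum]
    rw [one_div, inv_mul_cancel₀ hn]
    congr 1
    refine Finset.sum_congr rfl fun k _ => by ring
  rw [this, h]
  ring
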